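/- Wexler–Raz biorthogonality relations: for every subgroup Λ of ZMod N × ZMod N and all g, h ∈ ℂ^N, the following are equivalent: (1) f = ∑_{λ∈Λ} ⟨f, π(λ)h⟩ · π(λ)g for all f ∈ ℂ^N; (2) ⟨g, π(μ)h⟩ = N/|Λ| if μ = 0 and ⟨g, π(μ)h⟩ = 0 for all μ ∈ Λ° with μ ≠ 0, where |Λ| is the cardinality of Λ. -/

import Mathlib

open Complex Finset

/-- The time-frequency shift `π(k,r)` on `ℂ^N ≅ (ZMod N → ℂ)`:
`(π(k,r)f)(j) = e^{2πi·rj/N} · f(j−k)`. -/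
noncomputable def tfShift (N : ℕ) (k r : ZMod N) : (ZMod N → ℂ) →ₗ[ℂ] (ZMod N → ℂ) where
  toFun f := fun j => Complex.exp (2 * Real.pi * Complex.I * (((r * j).val : ℂ) / (N : ℂ))) * f (j - k)
  map_add' f g := by
    funext j
    simp [mul_add]
  map_smul' c f := by
    funext j
    simp [Pi.smul_apply, smul_eq_mul]
    ring

/-- The inner product `⟨f,g⟩ = ∑ⱼ f(j)·conj(g(j))`, linear in the first argument. -/
noncomputable def inn {N : ℕ} [NeZero N] (f g : ZMod N → ℂ) : ℂ :=
  ∑ j, f j * starRingEnd ℂ (g j)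

/-- The short-time Fourier transform `V_g f(k,r) = ⟨f, π(k,r)g⟩`. -/
noncomputable def stft {N : ℕ} [NeZero N] (g f : ZMod N → ℂ) (k r : ZMod N) : ℂ :=
  inn f (tfShift N k r g)

/-- The adjoint subgroup `Λ° = {(k,r) : l·r − k·s = 0 in ZMod N for all (l,s) ∈ Λ}`,
as a set. -/
def adjSet {N : ℕ} (Λ : AddSubgroup (ZMod N × ZMod N)) : Set (ZMod N × ZMod N) :=
  {p | ∀ q ∈ Λ, q.1 * p.2 - p.1 * q.2 = 0}

/-- The underlying finite set of a subgroup `Λ` of `ZMod N × ZMod N`. -/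
noncomputable def subFinset {N : ℕ} [NeZero N] (Λ : AddSubgroup (ZMod N × ZMod N)) :
    Finset (ZMod N × ZMod N) :=
  Set.Finite.toFinset (Set.toFinite (Λ : Set (ZMod N × ZMod N)))

/-- The underlying finite set of the adjoint subgroup `Λ°`. -/
noncomputable def adjFinset {N : ℕ} [NeZero N] (Λ : AddSubgroup (ZMod N × ZMod N)) :
    Finset (ZMod N × ZMod N) :=
  Set.Finite.toFinset (Set.toFinite (adjSet Λ))

/-- The rank-one operator `f ↦ ⟨f,h⟩·g`. -/
noncomputable def rankOne {N : ℕ} [NeZero N] (g h : ZMod N → ℂ) :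
    (ZMod N → ℂ) →ₗ[ℂ] (ZMod N → ℂ) where
  toFun f := inn f h • g
  map_add' f f' := by
    simp [inn, add_mul, Finset.sum_add_distrib, add_smul]
  map_smul' c f := by
    simp [inn, Finset.mul_sum, mul_assoc, mul_smul, smul_smul]

/-- The Gabor frame-type operator `S_{g,h,Λ} f = ∑_{λ∈Λ} ⟨f, π(λ)h⟩ · π(λ)g`. -/
noncomputable def gaborTypeOp (N : ℕ) [NeZero N] (Λ : AddSubgroup (ZMod N × ZMod N))
    (g h : ZMod N → ℂ) : (ZMod N → ℂ) →ₗ[ℂ] (ZMod N → ℂ) :=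
  ∑ lam ∈ subFinset Λ, rankOne (tfShift N lam.1 lam.2 g) (tfShift N lam.1 lam.2 h)

noncomputable def eN (N : ℕ) (a : ZMod N) : ℂ :=
  Complex.exp (2 * Real.pi * Complex.I * ((a.val : ℂ) / (N : ℂ)))

variable {N : ℕ} [NeZero N]

lemma NC_ne_zero : (N : ℂ) ≠ 0 := by exact_mod_cast (NeZero.ne N : N ≠ 0)

omit [NeZero N] in
lemma eN_ne_zero (a : ZMod N) : eN N a ≠ 0 := Complex.exp_ne_zero _

omit [NeZero N] in
lemma eN_zero : eN N (0 : ZMod N) = 1 := by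
  simp [eN, ZMod.val_zero]

omit [NeZero N] in
lemma eN_eq_pow (a : ZMod N) :
    eN N a = Complex.exp (2 * Real.pi * Complex.I / (N : ℂ)) ^ a.val := by
  rw [← Complex.exp_nat_mul, eN]
  ring_nf

lemma zeta_pow_N : Complex.exp (2 * Real.pi * Complex.I / (N : ℂ)) ^ N = 1 := by
  rw [← Complex.exp_nat_mul]
  have h : (N : ℂ) * (2 * Real.pi * Complex.I / (N : ℂ)) = 2 * Real.pi * Complex.I := by
    field_simp
    exact mul_inv_cancel₀ NC_ne_zero
  rw [h, Complex.exp_two_pi_mul_I]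

lemma zeta_pow_mod (x : ℕ) :
    Complex.exp (2 * Real.pi * Complex.I / (N : ℂ)) ^ (x % N)
      = Complex.exp (2 * Real.pi * Complex.I / (N : ℂ)) ^ x := by
  conv_rhs => rw [← Nat.mod_add_div x N, pow_add, pow_mul, zeta_pow_N, one_pow, mul_one]

lemma eN_add (a b : ZMod N) : eN N (a + b) = eN N a * eN N b := by
  rw [eN_eq_pow, eN_eq_pow, eN_eq_pow, ZMod.val_add, zeta_pow_mod, pow_add]

lemma eN_neg (a : ZMod N) : eN N (-a) = (eN N a)⁻¹ := by
  have h : eN N (-a) * eN N a = 1 := by rw [← eN_add, neg_add_cancel, eN_zero]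
  exact eq_inv_of_mul_eq_one_left h

lemma conj_eN (a : ZMod N) : starRingEnd ℂ (eN N a) = eN N (-a) := by
  rw [eN_neg, eN, ← Complex.exp_conj, ← Complex.exp_neg]
  congr 1
  simp only [map_mul, map_div₀, Complex.conj_I, Complex.conj_ofReal, map_ofNat,
    Complex.conj_natCast]
  ring

lemma eN_eq_one_iff (a : ZMod N) : eN N a = 1 ↔ a = 0 := by
  constructor
  · intro hv
    rw [eN, Complex.exp_eq_one_iff] at hv
    obtain ⟨n, hn⟩ := hv
    set v := a.val with hvdef
    have hN : (N : ℂ) ≠ 0 := NC_ne_zero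
    have h2 : (2 * Real.pi * Complex.I : ℂ) ≠ 0 := by
      simp [Real.pi_ne_zero, Complex.I_ne_zero]
    have hdiv : ((v : ℂ) / N) = n := by
      apply mul_left_cancel₀ h2
      rw [hn]; ring
    have hC : (v : ℂ) = (n : ℂ) * N := by
      field_simp at hdiv
      linear_combination hdiv
    have hR : (v : ℝ) = (n : ℝ) * N := by exact_mod_cast hC
    have hNpos : (0 : ℝ) < N := by exact_mod_cast Nat.pos_of_ne_zero (NeZero.ne N)
    have hlt : (v : ℝ) < N := by exact_mod_cast ZMod.val_lt a
    have hge : (0 : ℝ) ≤ (v : ℝ) := Nat.cast_nonneg _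
    have hn0 : n = 0 := by
      have h1 : (0 : ℝ) ≤ (n : ℝ) := by nlinarith
      have h2' : (n : ℝ) < 1 := by nlinarith
      have h1' : (0 : ℤ) ≤ n := by exact_mod_cast h1
      have h2'' : n < 1 := by exact_mod_cast h2'
      omega
    rw [hn0] at hR
    simp at hR
    exact (ZMod.val_eq_zero a).mp hR
  · rintro rfl; exact eN_zero

lemma sum_eN_eq (a : ZMod N) :
    ∑ j : ZMod N, eN N (a * j) = if a = 0 then (N : ℂ) else 0 := by
  split_ifs with ha
  · subst ha; simp [eN_zero, ZMod.card]
  · have key : ∑ j : ZMod N, eN N (a * j) = ∑ j : ZMod N, eN N (a * (j + 1)) :=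
      (Fintype.sum_equiv (Equiv.addRight (1 : ZMod N)) _ _ (fun j => rfl)).symm
    have h2 : ∀ j : ZMod N, eN N (a * (j + 1)) = eN N (a * j) * eN N a := by
      intro j; rw [← eN_add]; ring_nf
    simp_rw [h2, ← Finset.sum_mul] at key
    have ha1 : eN N a ≠ 1 := fun hc => ha ((eN_eq_one_iff a).mp hc)
    have h0 : (∑ j : ZMod N, eN N (a * j)) * (1 - eN N a) = 0 := by
      linear_combination key
    rcases mul_eq_zero.mp h0 with h | h
    · exact h
    · exact absurd (by linear_combination -h) ha1
section Main
variable {N : ℕ} [NeZero N]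

omit [NeZero N] in
lemma tfShift_apply (k r : ZMod N) (f : ZMod N → ℂ) (j : ZMod N) :
    tfShift N k r f j = eN N (r * j) * f (j - k) := rfl

lemma mem_subFinset (Λ : AddSubgroup (ZMod N × ZMod N)) (p : ZMod N × ZMod N) :
    p ∈ subFinset Λ ↔ p ∈ Λ := Set.Finite.mem_toFinset _

/-- The kernel of the Gabor-type operator. -/
noncomputable def Kker (Λ : AddSubgroup (ZMod N × ZMod N)) (g h : ZMod N → ℂ)
    (j m : ZMod N) : ℂ :=
  ∑ lam ∈ subFinset Λ,
    eN N (lam.2 * (j - m)) * (g (j - lam.1) * starRingEnd ℂ (h (m - lam.1)))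

lemma gabor_apply (Λ : AddSubgroup (ZMod N × ZMod N)) (g h f : ZMod N → ℂ) (j : ZMod N) :
    gaborTypeOp N Λ g h f j
      = ∑ lam ∈ subFinset Λ,
          inn f (tfShift N lam.1 lam.2 h) * tfShift N lam.1 lam.2 g j := by
  rw [gaborTypeOp, LinearMap.coe_sum, Finset.sum_apply, Finset.sum_apply]
  rfl

lemma gabor_eq_K (Λ : AddSubgroup (ZMod N × ZMod N)) (g h f : ZMod N → ℂ) (j : ZMod N) :
    gaborTypeOp N Λ g h f j = ∑ m, Kker Λ g h j m * f m := by
  rw [gabor_apply]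
  simp only [Kker, Finset.sum_mul]
  rw [Finset.sum_comm]
  apply Finset.sum_congr rfl
  intro lam _
  rw [inn, Finset.sum_mul]
  apply Finset.sum_congr rfl
  intro m _
  rw [tfShift_apply, tfShift_apply, map_mul, conj_eN]
  have he : eN N (lam.2 * (j - m)) = eN N (lam.2 * j) * eN N (-(lam.2 * m)) := by
    rw [← eN_add]; congr 1; ring
  rw [he]; ring

lemma step1 (Λ : AddSubgroup (ZMod N × ZMod N)) (g h : ZMod N → ℂ) :
    (∀ f : ZMod N → ℂ, gaborTypeOp N Λ g h f = f)
      ↔ ∀ j m : ZMod N, Kker Λ g h j m = if j = m then 1 else 0 := by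
  constructor
  · intro H j m
    have hh := congrFun (H (Pi.single m 1)) j
    rw [gabor_eq_K] at hh
    simp only [Pi.single_apply, mul_ite, mul_one, mul_zero] at hh
    rwa [Finset.sum_ite_eq' Finset.univ m, if_pos (Finset.mem_univ m)] at hh
  · intro H f
    funext j
    rw [gabor_eq_K]
    simp only [H, ite_mul, one_mul, zero_mul]
    rw [Finset.sum_ite_eq Finset.univ j, if_pos (Finset.mem_univ j)]

/-- The twisted discrete Fourier transform of the diagonal of the kernel. -/
noncomputable def Tfun (Λ : AddSubgroup (ZMod N × ZMod N)) (g h : ZMod N → ℂ)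
    (k r : ZMod N) : ℂ :=
  ∑ j, eN N (-(r * j)) * Kker Λ g h j (j - k)

lemma inn_tfShift (g h : ZMod N → ℂ) (k r : ZMod N) :
    inn g (tfShift N k r h)
      = ∑ t, eN N (-(r * t)) * (g t * starRingEnd ℂ (h (t - k))) := by
  rw [inn]
  apply Finset.sum_congr rfl
  intro t _
  rw [tfShift_apply, map_mul, conj_eN]
  ring

lemma T_eq (Λ : AddSubgroup (ZMod N × ZMod N)) (g h : ZMod N → ℂ) (k r : ZMod N) :
    Tfun Λ g h k r
      = inn g (tfShift N k r h)
          * ∑ lam ∈ subFinset Λ, eN N (lam.2 * k - r * lam.1) := by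
  rw [Tfun, inn_tfShift, Finset.sum_mul]
  simp only [Kker, Finset.mul_sum]
  rw [Finset.sum_comm]
  conv_rhs => rw [Finset.sum_comm]
  apply Finset.sum_congr rfl
  intro lam _
  refine (Fintype.sum_equiv (Equiv.addRight lam.1) _ _ fun t => ?_).symm
  simp only [Equiv.coe_addRight]
  have h1 : t + lam.1 - (t + lam.1 - k) = k := by ring
  have h2 : t + lam.1 - lam.1 = t := by ring
  have h3 : t + lam.1 - k - lam.1 = t - k := by ring
  have h4 : eN N (-(r * (t + lam.1))) = eN N (-(r * t)) * eN N (-(r * lam.1)) := by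
    rw [← eN_add]; congr 1; ring
  have h5 : eN N (lam.2 * k - r * lam.1) = eN N (lam.2 * k) * eN N (-(r * lam.1)) := by
    rw [← eN_add]; congr 1; ring
  rw [h1, h2, h3, h4, h5]
  ring

omit [NeZero N] in
lemma zero_mem_adjSet (Λ : AddSubgroup (ZMod N × ZMod N)) :
    (0 : ZMod N × ZMod N) ∈ adjSet Λ := by
  intro q _; simp

open scoped Classical in
lemma sum_char (Λ : AddSubgroup (ZMod N × ZMod N)) (k r : ZMod N) :
    ∑ lam ∈ subFinset Λ, eN N (lam.2 * k - r * lam.1)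
      = if (k, r) ∈ adjSet Λ then ((subFinset Λ).card : ℂ) else 0 := by
  split_ifs with hmem
  · rw [Finset.sum_congr rfl (fun lam hlam => ?_), Finset.sum_const, nsmul_eq_mul, mul_one]
    have h0 : lam.1 * r - k * lam.2 = 0 := hmem lam ((mem_subFinset Λ lam).mp hlam)
    have he : lam.2 * k - r * lam.1 = -(lam.1 * r - k * lam.2) := by ring
    rw [he, h0, neg_zero, eN_zero]
  · simp only [adjSet, Set.mem_setOf_eq, not_forall] at hmem
    obtain ⟨q, hq, hq0⟩ := hmem
    set S := ∑ lam ∈ subFinset Λ, eN N (lam.2 * k - r * lam.1) with hS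
    have key : S = S * eN N (q.2 * k - r * q.1) := by
      rw [hS, Finset.sum_mul]
      refine Finset.sum_nbij' (fun a => a - q) (fun a => a + q) ?_ ?_ ?_ ?_ ?_
      · intro a ha
        exact (mem_subFinset Λ _).mpr (Λ.sub_mem ((mem_subFinset Λ a).mp ha) hq)
      · intro a ha
        exact (mem_subFinset Λ _).mpr (Λ.add_mem ((mem_subFinset Λ a).mp ha) hq)
      · intro a _; simp
      · intro a _; simp
      · intro a _
        have harg : a.2 * k - r * a.1
            = ((a - q).2 * k - r * (a - q).1) + (q.2 * k - r * q.1) := by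
          simp only [Prod.snd_sub, Prod.fst_sub]; ring
        rw [harg, eN_add]
    have hne : eN N (q.2 * k - r * q.1) ≠ 1 := by
      rw [Ne, eN_eq_one_iff]
      intro hc
      apply hq0
      have he : q.1 * r - k * q.2 = -(q.2 * k - r * q.1) := by ring
      rw [he, hc, neg_zero]
    have h0 : S * (1 - eN N (q.2 * k - r * q.1)) = 0 := by linear_combination key
    rcases mul_eq_zero.mp h0 with hs | hs
    · exact hs
    · exact absurd (by linear_combination -hs) hne

lemma dft_inv (u : ZMod N → ℂ) (j : ZMod N) :
    ∑ r : ZMod N, eN N (r * j) * ∑ t, eN N (-(r * t)) * u t = (N : ℂ) * u j := by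
  have step : ∀ r : ZMod N, eN N (r * j) * ∑ t, eN N (-(r * t)) * u t
      = ∑ t, eN N ((j - t) * r) * u t := by
    intro r
    rw [Finset.mul_sum]
    apply Finset.sum_congr rfl
    intro t _
    have he : eN N ((j - t) * r) = eN N (r * j) * eN N (-(r * t)) := by
      rw [← eN_add]; congr 1; ring
    rw [he, mul_assoc]
  simp_rw [step]
  rw [Finset.sum_comm]
  have hmid : ∀ t : ZMod N, ∑ r : ZMod N, eN N ((j - t) * r) * u t
      = (if j - t = 0 then (N : ℂ) else 0) * u t := by
    intro t
    rw [← Finset.sum_mul, sum_eN_eq]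
  simp_rw [hmid]
  have h2 : ∀ t : ZMod N, (if j - t = 0 then (N : ℂ) else 0) * u t
      = if t = j then (N : ℂ) * u t else 0 := by
    intro t
    by_cases htj : t = j
    · subst htj; simp
    · rw [if_neg (fun hc => htj (by linear_combination -hc)), if_neg htj, zero_mul]
  simp_rw [h2]
  rw [Finset.sum_ite_eq' Finset.univ j, if_pos (Finset.mem_univ j)]

lemma step2 (Λ : AddSubgroup (ZMod N × ZMod N)) (g h : ZMod N → ℂ) :
    (∀ j m : ZMod N, Kker Λ g h j m = if j = m then 1 else 0)
      ↔ ∀ k r : ZMod N, Tfun Λ g h k r = if k = 0 ∧ r = 0 then (N : ℂ) else 0 := by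
  constructor
  · intro H k r
    rw [Tfun]
    by_cases hk : k = 0
    · subst hk
      have hterm : ∀ j : ZMod N, eN N (-(r * j)) * Kker Λ g h j (j - 0)
          = eN N ((-r) * j) := by
        intro j
        rw [sub_zero, H j j, if_pos rfl, mul_one]
        congr 1; ring
      rw [Finset.sum_congr rfl (fun j _ => hterm j), sum_eN_eq]
      simp [neg_eq_zero]
    · have hterm : ∀ j : ZMod N, eN N (-(r * j)) * Kker Λ g h j (j - k) = 0 := by
        intro j
        rw [H j (j - k), if_neg (fun hc => hk (by linear_combination hc)), mul_zero]
      rw [Finset.sum_congr rfl (fun j _ => hterm j), Finset.sum_const_zero,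
        if_neg (fun hc => hk hc.1)]
  · intro H j m
    have inv := dft_inv (fun t => Kker Λ g h t (t - (j - m))) j
    have hT : ∀ r : ZMod N,
        (∑ t, eN N (-(r * t)) * Kker Λ g h t (t - (j - m))) = Tfun Λ g h (j - m) r :=
      fun r => rfl
    simp only [hT, H] at inv
    have hm : j - (j - m) = m := by ring
    rw [hm] at inv
    by_cases hjm : j = m
    · subst hjm
      simp only [sub_self, true_and] at inv
      have hterm : ∀ r : ZMod N, eN N (r * j) * (if r = 0 then (N : ℂ) else 0)
          = if r = 0 then (N : ℂ) else 0 := by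
        intro r
        by_cases hr : r = 0
        · subst hr; rw [zero_mul, eN_zero, one_mul]
        · rw [if_neg hr, mul_zero]
      rw [Finset.sum_congr rfl (fun r _ => hterm r),
        Finset.sum_ite_eq' Finset.univ (0 : ZMod N) (fun _ => (N : ℂ)),
        if_pos (Finset.mem_univ _)] at inv
      rw [if_pos rfl]
      exact (mul_left_cancel₀ NC_ne_zero ((mul_one (N : ℂ)).trans inv)).symm
    · have h0 : ¬(j - m = 0) := fun hc => hjm (by linear_combination hc)
      simp only [h0, false_and, if_false, mul_zero, Finset.sum_const_zero] at inv
      rw [if_neg hjm]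
      exact ((mul_eq_zero.mp inv.symm).resolve_left NC_ne_zero)

end Main

/-- **Wexler–Raz biorthogonality relations**: the reconstruction formula
`f = ∑_{λ∈Λ} ⟨f, π(λ)h⟩ · π(λ)g` holds for all `f ∈ ℂ^N` if and only if
`⟨g, π(μ)h⟩ = N/|Λ|` for `μ = 0` and `⟨g, π(μ)h⟩ = 0` for all `μ ∈ Λ°`, `μ ≠ 0`. -/
theorem wexler_raz_biorthogonality (N : ℕ) [NeZero N]
    (Λ : AddSubgroup (ZMod N × ZMod N)) (g h : ZMod N → ℂ) :
    (∀ f : ZMod N → ℂ, gaborTypeOp N Λ g h f = f) ↔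
      ∀ mu ∈ adjSet Λ, inn g (tfShift N mu.1 mu.2 h)
        = if mu = 0 then (N : ℂ) / ((subFinset Λ).card : ℂ) else 0 := by
  have hcard : ((subFinset Λ).card : ℂ) ≠ 0 := by
    have h0 : (0 : ZMod N × ZMod N) ∈ subFinset Λ := (mem_subFinset Λ 0).mpr Λ.zero_mem
    exact_mod_cast Finset.card_ne_zero_of_mem h0
  have hsplit : ∀ mu : ZMod N × ZMod N, mu = 0 ↔ (mu.1 = 0 ∧ mu.2 = 0) := by
    intro mu; constructor
    · rintro rfl; exact ⟨rfl, rfl⟩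
    · rintro ⟨h1, h2⟩; exact Prod.ext h1 h2
  rw [step1, step2]
  constructor
  · intro H mu hmu
    have hT := H mu.1 mu.2
    rw [T_eq, sum_char, if_pos (show (mu.1, mu.2) ∈ adjSet Λ by rwa [Prod.mk.eta])] at hT
    by_cases hmu0 : mu = 0
    · rw [if_pos hmu0]
      rw [if_pos ((hsplit mu).mp hmu0)] at hT
      rw [eq_div_iff hcard]; exact hT
    · rw [if_neg hmu0]
      rw [if_neg (fun hc => hmu0 ((hsplit mu).mpr hc))] at hT
      exact (mul_eq_zero.mp hT).resolve_right hcard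
  · intro H k r
    rw [T_eq, sum_char]
    by_cases hmem : (k, r) ∈ adjSet Λ
    · rw [if_pos hmem]
      have hC := H (k, r) hmem
      by_cases h0 : k = 0 ∧ r = 0
      · rw [if_pos h0]
        rw [if_pos ((hsplit (k, r)).mpr h0)] at hC
        rw [hC, div_mul_cancel₀ _ hcard]
      · rw [if_neg h0]
        rw [if_neg (fun hc => h0 ((hsplit (k, r)).mp hc))] at hC
        rw [hC, zero_mul]
    · rw [if_neg hmem, mul_zero,
        if_neg (fun hc => hmem (by rw [hc.1, hc.2]; exact zero_mem_adjSet Λ))]
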